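/- In the dg algebra (T(a_1,...,a_{n−1}), ∂) with |a_i| = 2i−1, ∂a_i = Σ_{p=1}^{i−1} a_p a_{i−p}, the element v = a_1 a_{n−1} + a_2 a_{n−2} + ... + a_{n−1} a_1 of degree 2n−2 is a cycle: ∂v = 0. -/

import Mathlib

/-- In the dg algebra `(T(a_1,...,a_{n−1}), ∂)` with `|a_i| = 2i−1`,
`∂a_1 = 0`, `∂a_i = Σ_{p=1}^{i−1} a_p a_{i−p}` (graded derivation), the element
`v = a_1 a_{n−1} + a_2 a_{n−2} + ⋯ + a_{n−1} a_1` of degree `2n−2` is a cycle: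
`∂v = 0`. -/
theorem adamsHilton_CPn_top_cycle
    (n : ℕ) (hn : 2 ≤ n)
    (A : Type*) [Ring A] (d : A →ₗ[ℤ] A)
    (Hom : ℕ → Submodule ℤ A) (a : ℕ → A)
    (hmul : ∀ (i j : ℕ) (x y : A), x ∈ Hom i → y ∈ Hom j → x * y ∈ Hom (i + j))
    (hLeib : ∀ (i : ℕ) (x y : A), x ∈ Hom i →
      d (x * y) = d x * y + ((-1 : ℤ) ^ i) • (x * d y))
    (hdeg : ∀ i, 1 ≤ i → i ≤ n - 1 → a i ∈ Hom (2 * i - 1))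
    (hda1 : d (a 1) = 0)
    (hda : ∀ i, 2 ≤ i → i ≤ n - 1 →
      d (a i) = ∑ p ∈ Finset.Ioo 0 i, a p * a (i - p)) :
    d (∑ p ∈ Finset.Ioo 0 n, a p * a (n - p)) = 0 := by
  have hda' : ∀ p, 0 < p → p < n → d (a p) = ∑ q ∈ Finset.Ioo 0 p, a q * a (p - q) := by
    intro p hp1 hp2
    rcases Nat.lt_or_ge p 2 with h | h
    · have : p = 1 := by omega
      subst this
      rw [hda1]; symm; apply Finset.sum_eq_zero; intro q hq; simp only [Finset.mem_Ioo] at hq; omega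
    · exact hda p h (by omega)
  have key : ∀ p ∈ Finset.Ioo 0 n, d (a p * a (n - p)) =
      (∑ q ∈ Finset.Ioo 0 p, a q * a (p - q) * a (n - p)) -
      ∑ q ∈ Finset.Ioo 0 (n - p), a p * (a q * a (n - p - q)) := by
    intro p hp
    simp only [Finset.mem_Ioo] at hp
    rw [hLeib (2 * p - 1) _ _ (hdeg p hp.1 (by omega))]
    have hodd : ((-1 : ℤ) ^ (2 * p - 1)) = -1 := Odd.neg_one_pow ⟨p - 1, by omega⟩
    rw [hodd, hda' p hp.1 hp.2, hda' (n - p) (by omega) (by omega),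
      Finset.sum_mul, Finset.mul_sum]
    simp [sub_eq_add_neg]
  rw [map_sum, Finset.sum_congr rfl key, Finset.sum_sub_distrib, sub_eq_zero,
    Finset.sum_sigma', Finset.sum_sigma']
  refine Finset.sum_nbij' (fun x => ⟨x.2, x.1 - x.2⟩) (fun x => ⟨x.1 + x.2, x.1⟩)
    ?_ ?_ ?_ ?_ ?_
  · rintro ⟨p, q⟩ h
    simp only [Finset.mem_sigma, Finset.mem_Ioo] at h ⊢
    omega
  · rintro ⟨p, q⟩ h
    simp only [Finset.mem_sigma, Finset.mem_Ioo] at h ⊢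
    omega
  · rintro ⟨p, q⟩ h
    simp only [Finset.mem_sigma, Finset.mem_Ioo] at h
    simp only [Sigma.mk.inj_iff]
    exact ⟨by omega, heq_of_eq (by omega)⟩
  · rintro ⟨p, q⟩ h
    simp only [Finset.mem_sigma, Finset.mem_Ioo] at h
    simp only [Sigma.mk.inj_iff]
    refine ⟨?_, heq_of_eq (by omega)⟩
    first | trivial | omega
  · rintro ⟨p, q⟩ h
    simp only [Finset.mem_sigma, Finset.mem_Ioo] at h
    have h1 : n - q - (p - q) = n - p := by omega
    simp only [h1, mul_assoc]
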